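/- arXiv:1909.01480 — 3 statements merged into one kernel-verified Lean document; each statement's English description precedes it below -/
import Mathlib

section
/- For every natural number i, the function (x, y) ↦ x^i · ln(y + √(x² + y²)), defined at all points of K₀ other than the origin, is Lebesgue integrable on the reference triangle K₀ = {(x, y) ∈ ℝ² : 0 ≤ x, 0 ≤ y, x + y ≤ 1}. -/
open MeasureTheory

/-- The reference triangle K₀ = {(x, y) : 0 ≤ x, 0 ≤ y, x + y ≤ 1}. -/
def K0 : Set (ℝ × ℝ) := {p : ℝ × ℝ | 0 ≤ p.1 ∧ 0 ≤ p.2 ∧ p.1 + p.2 ≤ 1}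

lemma aux_g_int : IntegrableOn (fun x : ℝ => 2 * x ^ (-(1/2) : ℝ) + 1) (Set.Ioc 0 1) := by
  have h := (intervalIntegral.intervalIntegrable_rpow' (a := 0) (b := 1)
      (show (-1:ℝ) < -(1/2) by norm_num)).1
  exact (h.const_mul 2).add (integrableOn_const measure_Ioc_lt_top.ne)

lemma aux_prod_int :
    IntegrableOn (fun p : ℝ × ℝ => (2 * p.1 ^ (-(1/2) : ℝ) + 1) * 1)
      (Set.Ioc 0 1 ×ˢ Set.Icc 0 1) := by
  rw [IntegrableOn, MeasureTheory.Measure.volume_eq_prod, ← Measure.prod_restrict]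
  exact aux_g_int.mul_prod (integrableOn_const measure_Icc_lt_top.ne)

/-- The corner-singular function (x, y) ↦ x^i ln(y + √(x² + y²)) is Lebesgue integrable
on the reference triangle K₀. -/
theorem stmt_14 (i : ℕ) :
    IntegrableOn
      (fun p : ℝ × ℝ => p.1 ^ i * Real.log (p.2 + Real.sqrt (p.1 ^ 2 + p.2 ^ 2)))
      K0 := by
  -- the set where x = 0 is null
  have hnull : volume ({p : ℝ × ℝ | p.1 = 0}) = 0 := by
    have : {p : ℝ × ℝ | p.1 = 0} = ({0} : Set ℝ) ×ˢ (Set.univ : Set ℝ) := by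
      ext ⟨a, b⟩; simp [eq_comm]
    rw [this, MeasureTheory.Measure.volume_eq_prod, Measure.prod_prod]
    simp
  set S : Set (ℝ × ℝ) := K0 ∩ {p | 0 < p.1} with hS
  have hsub : S ⊆ Set.Ioc 0 1 ×ˢ Set.Icc 0 1 := by
    rintro ⟨x, y⟩ ⟨⟨hx, hy, hxy⟩, hx0⟩
    exact ⟨⟨hx0, by linarith⟩, hy, by linarith⟩
  have hmeas : AEStronglyMeasurable
      (fun p : ℝ × ℝ => p.1 ^ i * Real.log (p.2 + Real.sqrt (p.1 ^ 2 + p.2 ^ 2)))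
      (volume.restrict S) := by
    apply Measurable.aestronglyMeasurable
    have hm : Measurable fun p : ℝ × ℝ => p.2 + Real.sqrt (p.1 ^ 2 + p.2 ^ 2) :=
      measurable_snd.add (Real.continuous_sqrt.measurable.comp
        ((measurable_fst.pow_const 2).add (measurable_snd.pow_const 2)))
    exact (measurable_fst.pow_const i).mul (Real.measurable_log.comp hm)
  have hIS : IntegrableOn
      (fun p : ℝ × ℝ => p.1 ^ i * Real.log (p.2 + Real.sqrt (p.1 ^ 2 + p.2 ^ 2))) S := by
    apply Integrable.mono (aux_prod_int.mono_set hsub) hmeas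
    have hK0m : MeasurableSet K0 := by
      have : K0 = {p : ℝ × ℝ | 0 ≤ p.1} ∩ ({p | 0 ≤ p.2} ∩ {p | p.1 + p.2 ≤ 1}) := rfl
      rw [this]
      exact (measurableSet_le measurable_const measurable_fst).inter
        ((measurableSet_le measurable_const measurable_snd).inter
          (measurableSet_le (measurable_fst.add measurable_snd) measurable_const))
    have hSm : MeasurableSet S :=
      hK0m.inter (measurableSet_lt measurable_const measurable_fst)
    filter_upwards [ae_restrict_mem hSm] with p hp
    obtain ⟨⟨hx, hy, hxy⟩, hx0⟩ := hp
    have hxpos : (0:ℝ) < p.1 := hx0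
    set x := p.1; set y := p.2
    set t := y + Real.sqrt (x ^ 2 + y ^ 2) with ht
    have hx1 : x ≤ 1 := by linarith
    have hsq_ge : x ≤ Real.sqrt (x ^ 2 + y ^ 2) := by
      have : x = Real.sqrt (x ^ 2) := by rw [Real.sqrt_sq hx]
      rw [this]
      exact Real.sqrt_le_sqrt (by nlinarith)
    have hsq_le : Real.sqrt (x ^ 2 + y ^ 2) ≤ x + y := by
      rw [show x + y = Real.sqrt ((x + y) ^ 2) by rw [Real.sqrt_sq (by linarith : (0:ℝ) ≤ x + y)]]
      exact Real.sqrt_le_sqrt (by nlinarith)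
    have htx : x ≤ t := by simp only [ht]; linarith
    have ht2 : t ≤ 2 := by simp only [ht]; linarith
    have hlogx : Real.log x ≤ 0 := Real.log_nonpos hx hx1
    have hlogub : Real.log t ≤ Real.log 2 :=
      Real.log_le_log (lt_of_lt_of_le hxpos htx) ht2
    have hloglb : Real.log x ≤ Real.log t := Real.log_le_log hxpos htx
    have habs : |Real.log t| ≤ -Real.log x + 1 := by
      rw [abs_le]
      constructor
      · linarith
      · have : Real.log 2 ≤ 1 := by
          have := Real.log_le_sub_one_of_pos (by norm_num : (0:ℝ) < 2)
          linarith
        linarith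
    have hrpow : -Real.log x ≤ 2 * x ^ (-(1/2) : ℝ) := by
      have h1 : Real.log (x ^ (-(1/2) : ℝ)) = -(1/2) * Real.log x :=
        Real.log_rpow hxpos _
      have h2 : Real.log (x ^ (-(1/2) : ℝ)) ≤ x ^ (-(1/2) : ℝ) - 1 :=
        Real.log_le_sub_one_of_pos (Real.rpow_pos_of_pos hxpos _)
      have h3 : (0:ℝ) ≤ x ^ (-(1/2) : ℝ) := (Real.rpow_pos_of_pos hxpos _).le
      nlinarith
    have hxi : x ^ i ≤ 1 := pow_le_one₀ hx hx1
    have hxi0 : (0:ℝ) ≤ x ^ i := pow_nonneg hx i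
    have h3 : (0:ℝ) ≤ x ^ (-(1/2) : ℝ) := (Real.rpow_pos_of_pos hxpos _).le
    calc ‖x ^ i * Real.log t‖ = x ^ i * |Real.log t| := by
          rw [norm_mul, Real.norm_eq_abs, Real.norm_eq_abs, abs_of_nonneg hxi0]
      _ ≤ 1 * (-Real.log x + 1) := by
          apply mul_le_mul hxi habs (abs_nonneg _) zero_le_one
      _ ≤ 2 * x ^ (-(1/2) : ℝ) + 1 := by linarith
      _ ≤ ‖(2 * x ^ (-(1/2) : ℝ) + 1) * 1‖ := by
          rw [mul_one, Real.norm_eq_abs]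
          exact le_abs_self _
  have hae : S =ᵐ[volume] K0 := by
    rw [MeasureTheory.ae_eq_set]
    constructor
    · have : S \ K0 = ∅ := by
        rw [Set.diff_eq_empty]; exact Set.inter_subset_left
      simp [this]
    · apply measure_mono_null _ hnull
      rintro ⟨x, y⟩ ⟨⟨h1, h2, h3⟩, hns⟩
      simp only [Set.mem_setOf_eq]
      by_contra hne
      exact hns ⟨⟨h1, h2, h3⟩, lt_of_le_of_ne h1 (Ne.symm hne)⟩
  rw [IntegrableOn, ← Measure.restrict_congr_set hae]
  exact hIS
end

section
/- For every natural number i, the function (x, y) ↦ x^i · ln(y − 1 + √(x² + (y − 1)²)), defined at all points of K₀ with x > 0, is Lebesgue integrable on the reference triangle K₀ = {(x, y) ∈ ℝ² : 0 ≤ x, 0 ≤ y, x + y ≤ 1}. -/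
open MeasureTheory

lemma absLogInt : IntegrableOn (fun x : ℝ => |Real.log x|) (Set.Icc (0:ℝ) 1) := by
  have hr : IntegrableOn (fun x : ℝ => 2 * x ^ (-(1:ℝ)/2)) (Set.Icc (0:ℝ) 1) := by
    have := (intervalIntegral.intervalIntegrable_rpow' (a := 0) (b := 1)
      (r := -(1:ℝ)/2) (by norm_num)).const_mul 2
    rw [intervalIntegrable_iff_integrableOn_Ioc_of_le (by norm_num)] at this
    exact this.congr_set_ae (MeasureTheory.Ioc_ae_eq_Icc (α := ℝ) (μ := volume)).symm
  apply Integrable.mono' hr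
  · exact (Real.measurable_log.abs).aestronglyMeasurable
  · rw [ae_restrict_iff' measurableSet_Icc]
    filter_upwards with x hx
    rcases eq_or_lt_of_le hx.1 with h0 | h0
    · simp [← h0, Real.log_zero]
    · have hx1 : x ≤ 1 := hx.2
      have hlog : Real.log x ≤ 0 := Real.log_nonpos h0.le hx1
      rw [Real.norm_eq_abs, abs_abs, abs_of_nonpos hlog]
      have h1 : Real.log (x ^ (-(1:ℝ)/2)) ≤ x ^ (-(1:ℝ)/2) - 1 :=
        Real.log_le_sub_one_of_pos (Real.rpow_pos_of_pos h0 _)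
      rw [Real.log_rpow h0] at h1
      nlinarith [Real.rpow_pos_of_pos h0 (-(1:ℝ)/2)]

lemma gInt : IntegrableOn (fun p : ℝ × ℝ => 2 * |Real.log p.1| + Real.log 6)
    (Set.Icc (0:ℝ) 1 ×ˢ Set.Icc (0:ℝ) 1) := by
  have h1 : IntegrableOn (fun x : ℝ => 2 * |Real.log x| + Real.log 6) (Set.Icc (0:ℝ) 1) :=
    (absLogInt.const_mul 2).add ((integrableOn_const_iff).mpr (Or.inr (by simp)))
  have h2 : IntegrableOn (fun _ : ℝ => (1:ℝ)) (Set.Icc (0:ℝ) 1) :=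
    (integrableOn_const_iff).mpr (Or.inr (by simp))
  have := h1.mul_prod h2
  rw [Measure.prod_restrict] at this
  rw [IntegrableOn, Measure.volume_eq_prod]
  simpa using this

/-- The edge-singular function (x, y) ↦ x^i ln(y − 1 + √(x² + (y − 1)²)) is Lebesgue
integrable on the reference triangle K₀. -/
theorem stmt_15 (i : ℕ) :
    IntegrableOn
      (fun p : ℝ × ℝ =>
        p.1 ^ i * Real.log (p.2 - 1 + Real.sqrt (p.1 ^ 2 + (p.2 - 1) ^ 2)))
      K0 := by
  have hKsub : K0 ⊆ Set.Icc (0:ℝ) 1 ×ˢ Set.Icc (0:ℝ) 1 := by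
    rintro ⟨x, y⟩ ⟨hx, hy, hxy⟩
    exact ⟨⟨hx, by linarith⟩, ⟨hy, by linarith⟩⟩
  have hg : IntegrableOn (fun p : ℝ × ℝ => 2 * |Real.log p.1| + Real.log 6) K0 :=
    gInt.mono_set hKsub
  have hK0meas : MeasurableSet K0 := by
    apply MeasurableSet.inter
    · exact measurableSet_le measurable_const measurable_fst
    apply MeasurableSet.inter
    · exact measurableSet_le measurable_const measurable_snd
    · exact measurableSet_le (measurable_fst.add measurable_snd) measurable_const
  apply Integrable.mono' hg
  · apply Measurable.aestronglyMeasurable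
    apply (measurable_fst.pow_const i).mul
    apply Real.measurable_log.comp
    exact (measurable_snd.sub measurable_const).add
      (((measurable_fst.pow_const 2).add ((measurable_snd.sub measurable_const).pow_const 2)).sqrt)
  · rw [ae_restrict_iff' hK0meas]
    filter_upwards with p hp
    obtain ⟨hx, hy, hxy⟩ := hp
    set x := p.1
    set y := p.2
    have hx1 : x ≤ 1 := by linarith
    have hy1 : y ≤ 1 := by linarith
    set u : ℝ := 1 - y with hu
    have hu0 : 0 ≤ u := by simp [hu]; linarith
    have hu1 : u ≤ 1 := by simp [hu]; linarith
    have hsq : (y - 1) ^ 2 = u ^ 2 := by ring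
    rcases eq_or_lt_of_le hx with h0 | h0
    · -- x = 0
      have : Real.sqrt (x ^ 2 + (y - 1) ^ 2) = u := by
        rw [← h0, hsq]; simp [Real.sqrt_sq hu0]
      rw [this]
      have : y - 1 + u = 0 := by simp [hu]
      rw [this, Real.log_zero, mul_zero]
      simp only [norm_zero]
      have : (0:ℝ) ≤ Real.log 6 := Real.log_nonneg (by norm_num)
      positivity
    · -- x > 0
      set r : ℝ := Real.sqrt (x ^ 2 + (y - 1) ^ 2) with hrdef
      have hr0 : 0 ≤ r := Real.sqrt_nonneg _
      have hr2 : r ^ 2 = x ^ 2 + u ^ 2 := by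
        rw [hrdef, hsq, Real.sq_sqrt (by positivity)]
      have hur : u ≤ r := by nlinarith
      have harg : y - 1 + r = r - u := by simp [hu]; ring
      have hprod : (r - u) * (r + u) = x ^ 2 := by nlinarith
      have hru3 : r + u ≤ 3 := by nlinarith
      have hargpos : 0 < r - u := by nlinarith
      have harg_le : r - u ≤ x := by nlinarith
      have hlow : x ^ 2 / 3 ≤ r - u := by
        rw [div_le_iff₀ (by norm_num)]
        nlinarith
      have hlogx : Real.log x ≤ 0 := Real.log_nonpos h0.le hx1
      have hlog_le : Real.log (r - u) ≤ 0 :=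
        Real.log_nonpos hargpos.le (by linarith)
      have hlog_ge : 2 * Real.log x - Real.log 3 ≤ Real.log (r - u) := by
        have := Real.log_le_log (by positivity) hlow
        rw [Real.log_div (by positivity) (by norm_num), Real.log_pow] at this
        push_cast at this
        linarith
      rw [harg, Real.norm_eq_abs, abs_mul, abs_of_nonpos hlog_le, abs_pow, abs_of_nonneg hx]
      have hxi : x ^ i ≤ 1 := pow_le_one₀ hx hx1
      have hxi0 : (0:ℝ) ≤ x ^ i := by positivity
      have h36 : Real.log 3 ≤ Real.log 6 := Real.log_le_log (by norm_num) (by norm_num)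
      have habs : |Real.log x| = -Real.log x := abs_of_nonpos hlogx
      calc x ^ i * -Real.log (r - u) ≤ 1 * -Real.log (r - u) := by
            apply mul_le_mul_of_nonneg_right hxi (by linarith)
        _ ≤ 2 * |Real.log x| + Real.log 6 := by rw [habs]; linarith
end

section
/- Let p₁, p₂, p₃, p₄ ∈ ℝ² be the vertices, listed in counterclockwise cyclic order, of a strictly convex quadrilateral, i.e., suppose det(p₂ − p₁, p₄ − p₁) > 0, det(p₃ − p₂, p₁ − p₂) > 0, det(p₄ − p₃, p₂ − p₃) > 0, and det(p₁ − p₄, p₃ − p₄) > 0. Define the bilinear map Φ : [0,1]² → ℝ² by Φ(ξ, η) = (1−ξ)(1−η) p₁ + ξ(1−η) p₂ + ξη p₃ + (1−ξ)η p₄, and let J(ξ, η) = det(∂Φ/∂ξ, ∂Φ/∂η) be the determinant of its Jacobian. Then Φ is a bijection from [0,1]² onto the quadrilateral Q = conv{p₁, p₂, p₃, p₄}, J(ξ, η) > 0 for all (ξ, η) ∈ [0,1]², and for every function f : ℝ² → ℝ integrable on Q, ∫_Q f dλ = ∫_{[0,1]²} f(Φ(ξ, η)) · J(ξ, η) d(ξ,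 η). -/
open MeasureTheory

lemma ivt_aux (w1 w2 w3 w4 s1 s2 s3 s4 : ℝ)
    (hw1 : 0 ≤ w1) (hw2 : 0 ≤ w2) (hw3 : 0 ≤ w3) (hw4 : 0 ≤ w4)
    (hs1 : 0 < s1) (hs2 : 0 < s2) (hs3 : 0 < s3) (hs4 : 0 < s4) :
    ∃ t : ℝ, 0 ≤ w1 + t*s1 ∧ 0 ≤ w2 - t*s2 ∧ 0 ≤ w3 + t*s3 ∧ 0 ≤ w4 - t*s4 ∧
      (w1 + t*s1) * (w3 + t*s3) = (w2 - t*s2) * (w4 - t*s4) := by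
  set tm : ℝ := -(min (w1/s1) (w3/s3)) with htmdef
  set tp : ℝ := min (w2/s2) (w4/s4) with htpdef
  have htm : tm ≤ 0 := neg_nonpos.mpr (le_min (div_nonneg hw1 hs1.le) (div_nonneg hw3 hs3.le))
  have htp : 0 ≤ tp := le_min (div_nonneg hw2 hs2.le) (div_nonneg hw4 hs4.le)
  set g : ℝ → ℝ := fun t => (w1 + t*s1) * (w3 + t*s3) - (w2 - t*s2) * (w4 - t*s4) with hgdef
  have hcont : ContinuousOn g (Set.Icc tm tp) := by fun_prop
  have h1m : ∀ t, tm ≤ t → 0 ≤ w1 + t*s1 := by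
    intro t ht
    have : -(w1/s1) ≤ t := le_trans (neg_le_neg (min_le_left _ _)) ht
    have := mul_le_mul_of_nonneg_right this hs1.le
    rw [neg_mul, div_mul_cancel₀ _ hs1.ne'] at this
    nlinarith [mul_le_mul_of_nonneg_right ht hs1.le]
  have h3m : ∀ t, tm ≤ t → 0 ≤ w3 + t*s3 := by
    intro t ht
    have h : -(w3/s3) ≤ t := le_trans (neg_le_neg (min_le_right _ _)) ht
    have := mul_le_mul_of_nonneg_right h hs3.le
    rw [neg_mul, div_mul_cancel₀ _ hs3.ne'] at this
    linarith
  have h2m : ∀ t, t ≤ tp → 0 ≤ w2 - t*s2 := by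
    intro t ht
    have h : t ≤ w2/s2 := le_trans ht (min_le_left _ _)
    have := mul_le_mul_of_nonneg_right h hs2.le
    rw [div_mul_cancel₀ _ hs2.ne'] at this
    linarith
  have h4m : ∀ t, t ≤ tp → 0 ≤ w4 - t*s4 := by
    intro t ht
    have h : t ≤ w4/s4 := le_trans ht (min_le_right _ _)
    have := mul_le_mul_of_nonneg_right h hs4.le
    rw [div_mul_cancel₀ _ hs4.ne'] at this
    linarith
  have hgtm : g tm ≤ 0 := by
    have hprod : (w1 + tm*s1) * (w3 + tm*s3) = 0 := by
      rcases le_total (w1/s1) (w3/s3) with h | h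
      · have : tm = -(w1/s1) := by rw [htmdef, min_eq_left h]
        have : w1 + tm*s1 = 0 := by rw [this]; field_simp; ring
        rw [this, zero_mul]
      · have : tm = -(w3/s3) := by rw [htmdef, min_eq_right h]
        have : w3 + tm*s3 = 0 := by rw [this]; field_simp; ring
        rw [this, mul_zero]
    have h2' : 0 ≤ w2 - tm*s2 := h2m tm (le_trans htm htp)
    have h4' : 0 ≤ w4 - tm*s4 := h4m tm (le_trans htm htp)
    simp only [hgdef]
    nlinarith
  have hgtp : 0 ≤ g tp := by
    have hprod : (w2 - tp*s2) * (w4 - tp*s4) = 0 := by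
      rcases le_total (w2/s2) (w4/s4) with h | h
      · have : tp = w2/s2 := by rw [htpdef, min_eq_left h]
        have : w2 - tp*s2 = 0 := by rw [this]; field_simp; ring
        rw [this, zero_mul]
      · have : tp = w4/s4 := by rw [htpdef, min_eq_right h]
        have : w4 - tp*s4 = 0 := by rw [this]; field_simp; ring
        rw [this, mul_zero]
    have h1' : 0 ≤ w1 + tp*s1 := h1m tp (le_trans htm htp)
    have h3' : 0 ≤ w3 + tp*s3 := h3m tp (le_trans htm htp)
    simp only [hgdef]
    nlinarith
  have : (0:ℝ) ∈ Set.Icc (g tm) (g tp) := ⟨hgtm, hgtp⟩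
  obtain ⟨t, ht, hgt⟩ := intermediate_value_Icc (le_trans htm htp) hcont this
  exact ⟨t, h1m t ht.1, h2m t ht.2, h3m t ht.1, h4m t ht.2, by
    have := hgt; simp only [hgdef] at this; linarith⟩

lemma clm_det (L : ℝ×ℝ →L[ℝ] ℝ×ℝ) :
    L.det = (L (1,0)).1 * (L (0,1)).2 - (L (0,1)).1 * (L (1,0)).2 := by
  have : L.det = LinearMap.det (L : ℝ×ℝ →ₗ[ℝ] ℝ×ℝ) := rfl
  rw [this, ← LinearMap.det_toMatrix (Module.Basis.finTwoProd ℝ), Matrix.det_fin_two]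
  simp [LinearMap.toMatrix_apply, Module.Basis.coe_finTwoProd_repr, Module.Basis.finTwoProd_zero,
    Module.Basis.finTwoProd_one]

lemma hasFDeriv_bilin (q a b c : ℝ×ℝ) (x y : ℝ) :
    HasFDerivAt (fun p : ℝ×ℝ => q + p.1 • a + p.2 • b + (p.1*p.2) • c)
      (((ContinuousLinearMap.fst ℝ ℝ ℝ).smulRight (a + y • c)) +
       ((ContinuousLinearMap.snd ℝ ℝ ℝ).smulRight (b + x • c))) (x, y) := by
  have hf : HasFDerivAt (fun p : ℝ×ℝ => p.1) (ContinuousLinearMap.fst ℝ ℝ ℝ) (x, y) :=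
    hasFDerivAt_fst
  have hs : HasFDerivAt (fun p : ℝ×ℝ => p.2) (ContinuousLinearMap.snd ℝ ℝ ℝ) (x, y) :=
    hasFDerivAt_snd
  have hmul := (hf.mul hs).smul_const c
  have h1 := hf.smul_const a
  have h2 := hs.smul_const b
  have h := (((hasFDerivAt_const q (x,y)).add h1).add h2).add hmul
  refine h.congr_fderiv ?_
  apply ContinuousLinearMap.ext
  intro v
  simp only [ContinuousLinearMap.add_apply, ContinuousLinearMap.smulRight_apply,
    ContinuousLinearMap.coe_fst', ContinuousLinearMap.coe_snd', ContinuousLinearMap.zero_apply,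
    ContinuousLinearMap.smul_apply, smul_eq_mul]
  module

lemma surj_aux (p1 p2 p3 p4 q : ℝ × ℝ) (s1 s2 s3 s4 w1 w2 w3 w4 : ℝ)
    (hs1 : 0 < s1) (hs2 : 0 < s2) (hs3 : 0 < s3) (hs4 : 0 < s4)
    (hrel : s1 • p1 + s3 • p3 = s2 • p2 + s4 • p4)
    (hssum : s1 + s3 = s2 + s4)
    (hw1 : 0 ≤ w1) (hw2 : 0 ≤ w2) (hw3 : 0 ≤ w3) (hw4 : 0 ≤ w4)
    (hwsum : w1 + w2 + w3 + w4 = 1)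
    (hq : q = w1 • p1 + w2 • p2 + w3 • p3 + w4 • p4) :
    ∃ x y : ℝ, x ∈ Set.Icc (0:ℝ) 1 ∧ y ∈ Set.Icc (0:ℝ) 1 ∧
      ((1 - x) * (1 - y)) • p1 + (x * (1 - y)) • p2 + (x * y) • p3 + ((1 - x) * y) • p4 = q := by
  obtain ⟨t, hW1, hW2, hW3, hW4, hprodt⟩ :=
    ivt_aux w1 w2 w3 w4 s1 s2 s3 s4 hw1 hw2 hw3 hw4 hs1 hs2 hs3 hs4
  refine ⟨(w2 - t*s2) + (w3 + t*s3), (w3 + t*s3) + (w4 - t*s4), ?_, ?_, ?_⟩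
  · constructor
    · linarith
    · nlinarith [hW1, hW4]
  · constructor
    · linarith
    · nlinarith [hW1, hW2]
  · have hsum' : (w1 + t*s1) + (w2 - t*s2) + (w3 + t*s3) + (w4 - t*s4) = 1 := by
      linear_combination hwsum + t*hssum
    have e1 : (1 - ((w2 - t*s2) + (w3 + t*s3))) * (1 - ((w3 + t*s3) + (w4 - t*s4)))
        = w1 + t*s1 := by linear_combination ((w3 + t*s3) - 1) * hsum' - hprodt
    have e2 : ((w2 - t*s2) + (w3 + t*s3)) * (1 - ((w3 + t*s3) + (w4 - t*s4)))
        = w2 - t*s2 := by linear_combination (-(w3 + t*s3)) * hsum' + hprodt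
    have e3 : ((w2 - t*s2) + (w3 + t*s3)) * ((w3 + t*s3) + (w4 - t*s4))
        = w3 + t*s3 := by linear_combination (w3 + t*s3) * hsum' - hprodt
    have e4 : (1 - ((w2 - t*s2) + (w3 + t*s3))) * ((w3 + t*s3) + (w4 - t*s4))
        = w4 - t*s4 := by linear_combination (-(w3 + t*s3)) * hsum' + hprodt
    have hq1 : q.1 = w1 * p1.1 + w2 * p2.1 + w3 * p3.1 + w4 * p4.1 := by
      rw [hq]; simp
    have hq2 : q.2 = w1 * p1.2 + w2 * p2.2 + w3 * p3.2 + w4 * p4.2 := by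
      rw [hq]; simp
    have hrel1 : s1 * p1.1 + s3 * p3.1 = s2 * p2.1 + s4 * p4.1 := by
      have := congrArg Prod.fst hrel; simpa using this
    have hrel2 : s1 * p1.2 + s3 * p3.2 = s2 * p2.2 + s4 * p4.2 := by
      have := congrArg Prod.snd hrel; simpa using this
    apply Prod.ext
    · simp only [Prod.fst_add, Prod.smul_fst, smul_eq_mul]
      linear_combination p1.1 * e1 + p2.1 * e2 + p3.1 * e3 + p4.1 * e4 - hq1 + t*hrel1
    · simp only [Prod.snd_add, Prod.smul_snd, smul_eq_mul]
      linear_combination p1.2 * e1 + p2.2 * e2 + p3.2 * e3 + p4.2 * e4 - hq2 + t*hrel2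

lemma shape_pos (D1 D2 D3 D4 x y : ℝ) (h1 : 0 < D1) (h2 : 0 < D2) (h3 : 0 < D3) (h4 : 0 < D4)
    (hx0 : 0 ≤ x) (hx1 : x ≤ 1) (hy0 : 0 ≤ y) (hy1 : y ≤ 1) :
    0 < (1-x)*(1-y)*D1 + x*(1-y)*D2 + x*y*D3 + (1-x)*y*D4 := by
  have hx1' : (0:ℝ) ≤ 1 - x := by linarith
  have hy1' : (0:ℝ) ≤ 1 - y := by linarith
  have n1 : 0 ≤ (1-x)*(1-y)*D1 := mul_nonneg (mul_nonneg hx1' hy1') h1.le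
  have n2 : 0 ≤ x*(1-y)*D2 := mul_nonneg (mul_nonneg hx0 hy1') h2.le
  have n3 : 0 ≤ x*y*D3 := mul_nonneg (mul_nonneg hx0 hy0) h3.le
  have n4 : 0 ≤ (1-x)*y*D4 := mul_nonneg (mul_nonneg hx1' hy0) h4.le
  rcases le_or_gt x (1/2) with hx' | hx' <;> rcases le_or_gt y (1/2) with hy' | hy'
  · have hb : (1/4:ℝ) ≤ (1-x)*(1-y) := by nlinarith
    nlinarith [mul_le_mul_of_nonneg_right hb h1.le]
  · have hb : (1/4:ℝ) ≤ (1-x)*y := by nlinarith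
    nlinarith [mul_le_mul_of_nonneg_right hb h4.le]
  · have hb : (1/4:ℝ) ≤ x*(1-y) := by nlinarith
    nlinarith [mul_le_mul_of_nonneg_right hb h2.le]
  · have hb : (1/4:ℝ) ≤ x*y := by nlinarith
    nlinarith [mul_le_mul_of_nonneg_right hb h3.le]

/-- The bilinear map Φ(ξ, η) = (1−ξ)(1−η) p₁ + ξ(1−η) p₂ + ξη p₃ + (1−ξ)η p₄ maps the
unit square bijectively onto a strictly convex quadrilateral Q = conv{p₁, p₂, p₃, p₄}
(vertices in counterclockwise order), its Jacobian determinant J is positive on the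
square, and ∫_Q f = ∫_{[0,1]²} f(Φ(ξ, η)) J(ξ, η) d(ξ, η) for every f integrable on Q. -/
theorem stmt_18 (p1 p2 p3 p4 : ℝ × ℝ)
    (h1 : 0 < (p2.1 - p1.1) * (p4.2 - p1.2) - (p4.1 - p1.1) * (p2.2 - p1.2))
    (h2 : 0 < (p3.1 - p2.1) * (p1.2 - p2.2) - (p1.1 - p2.1) * (p3.2 - p2.2))
    (h3 : 0 < (p4.1 - p3.1) * (p2.2 - p3.2) - (p2.1 - p3.1) * (p4.2 - p3.2))
    (h4 : 0 < (p1.1 - p4.1) * (p3.2 - p4.2) - (p3.1 - p4.1) * (p1.2 - p4.2))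
    (Φ : ℝ × ℝ → ℝ × ℝ)
    (hΦ : ∀ ξ η : ℝ, Φ (ξ, η) =
      ((1 - ξ) * (1 - η)) • p1 + (ξ * (1 - η)) • p2 + (ξ * η) • p3 + ((1 - ξ) * η) • p4)
    (J : ℝ × ℝ → ℝ)
    (hJ : ∀ p : ℝ × ℝ, J p =
      (fderiv ℝ Φ p (1, 0)).1 * (fderiv ℝ Φ p (0, 1)).2 -
        (fderiv ℝ Φ p (0, 1)).1 * (fderiv ℝ Φ p (1, 0)).2) :
    Set.BijOn Φ (Set.Icc (0 : ℝ) 1 ×ˢ Set.Icc (0 : ℝ) 1)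
      (convexHull ℝ {p1, p2, p3, p4}) ∧
    (∀ p ∈ Set.Icc (0 : ℝ) 1 ×ˢ Set.Icc (0 : ℝ) 1, 0 < J p) ∧
    ∀ f : ℝ × ℝ → ℝ, IntegrableOn f (convexHull ℝ {p1, p2, p3, p4}) →
      ∫ x in convexHull ℝ {p1, p2, p3, p4}, f x =
        ∫ p in Set.Icc (0 : ℝ) 1 ×ˢ Set.Icc (0 : ℝ) 1, f (Φ p) * J p := by
  -- abbreviations
  set a : ℝ × ℝ := p2 - p1 with ha
  set b : ℝ × ℝ := p4 - p1 with hb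
  set c : ℝ × ℝ := p1 - p2 + p3 - p4 with hc
  have hΦeq : Φ = fun p : ℝ × ℝ => p1 + p.1 • a + p.2 • b + (p.1 * p.2) • c := by
    funext p
    obtain ⟨x, y⟩ := p
    rw [hΦ x y, ha, hb, hc]
    module
  set L : ℝ × ℝ → (ℝ × ℝ →L[ℝ] ℝ × ℝ) := fun p =>
    ((ContinuousLinearMap.fst ℝ ℝ ℝ).smulRight (a + p.2 • c)) +
    ((ContinuousLinearMap.snd ℝ ℝ ℝ).smulRight (b + p.1 • c)) with hLdef
  have hLx : ∀ p : ℝ × ℝ, HasFDerivAt Φ (L p) p := by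
    intro p
    obtain ⟨x, y⟩ := p
    rw [hΦeq]
    exact hasFDeriv_bilin p1 a b c x y
  have hfd : ∀ p : ℝ × ℝ, fderiv ℝ Φ p = L p := fun p => (hLx p).fderiv
  -- scalar positivity of the shape combination
  have key : ∀ x y : ℝ, 0 ≤ x → x ≤ 1 → 0 ≤ y → y ≤ 1 →
      0 < (1-x)*(1-y)*((p2.1 - p1.1) * (p4.2 - p1.2) - (p4.1 - p1.1) * (p2.2 - p1.2))
        + x*(1-y)*((p3.1 - p2.1) * (p1.2 - p2.2) - (p1.1 - p2.1) * (p3.2 - p2.2))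
        + x*y*((p4.1 - p3.1) * (p2.2 - p3.2) - (p2.1 - p3.1) * (p4.2 - p3.2))
        + (1-x)*y*((p1.1 - p4.1) * (p3.2 - p4.2) - (p3.1 - p4.1) * (p1.2 - p4.2)) := by
    intro x y hx0 hx1 hy0 hy1
    exact shape_pos _ _ _ _ x y h1 h2 h3 h4 hx0 hx1 hy0 hy1
  -- J in shape form
  have hJshape : ∀ x y : ℝ, J (x, y) =
      (1-x)*(1-y)*((p2.1 - p1.1) * (p4.2 - p1.2) - (p4.1 - p1.1) * (p2.2 - p1.2))
        + x*(1-y)*((p3.1 - p2.1) * (p1.2 - p2.2) - (p1.1 - p2.1) * (p3.2 - p2.2))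
        + x*y*((p4.1 - p3.1) * (p2.2 - p3.2) - (p2.1 - p3.1) * (p4.2 - p3.2))
        + (1-x)*y*((p1.1 - p4.1) * (p3.2 - p4.2) - (p3.1 - p4.1) * (p1.2 - p4.2)) := by
    intro x y
    rw [hJ (x, y), hfd (x, y), hLdef]
    simp only [ContinuousLinearMap.add_apply, ContinuousLinearMap.smulRight_apply,
      ContinuousLinearMap.coe_fst', ContinuousLinearMap.coe_snd', ha, hb, hc,
      Prod.fst_add, Prod.snd_add, Prod.fst_sub, Prod.snd_sub, Prod.smul_fst, Prod.smul_snd,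
      smul_eq_mul]
    ring
  have hJpos : ∀ p ∈ Set.Icc (0 : ℝ) 1 ×ˢ Set.Icc (0 : ℝ) 1, 0 < J p := by
    rintro ⟨x, y⟩ ⟨⟨hx0, hx1⟩, ⟨hy0, hy1⟩⟩
    rw [hJshape x y]
    exact key x y hx0 hx1 hy0 hy1
  -- injectivity
  have hinj : Set.InjOn Φ (Set.Icc (0 : ℝ) 1 ×ˢ Set.Icc (0 : ℝ) 1) := by
    rintro ⟨x1', y1'⟩ ⟨⟨hx10, hx11⟩, ⟨hy10, hy11⟩⟩ ⟨x2', y2'⟩ ⟨⟨hx20, hx21⟩, ⟨hy20, hy21⟩⟩ heq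
    rw [hΦ x1' y1', hΦ x2' y2'] at heq
    have E1 : (1 - x1') * (1 - y1') * p1.1 + x1' * (1 - y1') * p2.1 + x1' * y1' * p3.1
        + (1 - x1') * y1' * p4.1 = (1 - x2') * (1 - y2') * p1.1 + x2' * (1 - y2') * p2.1
        + x2' * y2' * p3.1 + (1 - x2') * y2' * p4.1 := by
      have := congrArg Prod.fst heq
      simpa using this
    have E2 : (1 - x1') * (1 - y1') * p1.2 + x1' * (1 - y1') * p2.2 + x1' * y1' * p3.2
        + (1 - x1') * y1' * p4.2 = (1 - x2') * (1 - y2') * p1.2 + x2' * (1 - y2') * p2.2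
        + x2' * y2' * p3.2 + (1 - x2') * y2' * p4.2 := by
      have := congrArg Prod.snd heq
      simpa using this
    set X : ℝ := (x1' + x2') / 2 with hX
    set Y : ℝ := (y1' + y2') / 2 with hY
    have hK := key X Y (by rw [hX]; linarith) (by rw [hX]; linarith)
      (by rw [hY]; linarith) (by rw [hY]; linarith)
    have hxK : (x1' - x2') *
        ((1-X)*(1-Y)*((p2.1 - p1.1) * (p4.2 - p1.2) - (p4.1 - p1.1) * (p2.2 - p1.2))
        + X*(1-Y)*((p3.1 - p2.1) * (p1.2 - p2.2) - (p1.1 - p2.1) * (p3.2 - p2.2))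
        + X*Y*((p4.1 - p3.1) * (p2.2 - p3.2) - (p2.1 - p3.1) * (p4.2 - p3.2))
        + (1-X)*Y*((p1.1 - p4.1) * (p3.2 - p4.2) - (p3.1 - p4.1) * (p1.2 - p4.2))) = 0 := by
      rw [hX, hY]
      linear_combination
        ((p4.2 - p1.2) + ((x1'+x2')/2) * (p1.2 - p2.2 + p3.2 - p4.2)) * E1
        - ((p4.1 - p1.1) + ((x1'+x2')/2) * (p1.1 - p2.1 + p3.1 - p4.1)) * E2
    have hyK : (y1' - y2') *
        ((1-X)*(1-Y)*((p2.1 - p1.1) * (p4.2 - p1.2) - (p4.1 - p1.1) * (p2.2 - p1.2))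
        + X*(1-Y)*((p3.1 - p2.1) * (p1.2 - p2.2) - (p1.1 - p2.1) * (p3.2 - p2.2))
        + X*Y*((p4.1 - p3.1) * (p2.2 - p3.2) - (p2.1 - p3.1) * (p4.2 - p3.2))
        + (1-X)*Y*((p1.1 - p4.1) * (p3.2 - p4.2) - (p3.1 - p4.1) * (p1.2 - p4.2))) = 0 := by
      rw [hX, hY]
      linear_combination
        ((p2.1 - p1.1) + ((y1'+y2')/2) * (p1.1 - p2.1 + p3.1 - p4.1)) * E2
        - ((p2.2 - p1.2) + ((y1'+y2')/2) * (p1.2 - p2.2 + p3.2 - p4.2)) * E1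
    have hx : x1' = x2' := by
      rcases mul_eq_zero.mp hxK with h | h
      · linarith
      · exact absurd h hK.ne'
    have hy : y1' = y2' := by
      rcases mul_eq_zero.mp hyK with h | h
      · linarith
      · exact absurd h hK.ne'
    exact Prod.ext hx hy
  -- maps to
  have hp1m : p1 ∈ convexHull ℝ ({p1,p2,p3,p4} : Set (ℝ×ℝ)) := subset_convexHull ℝ _ (by simp)
  have hp2m : p2 ∈ convexHull ℝ ({p1,p2,p3,p4} : Set (ℝ×ℝ)) := subset_convexHull ℝ _ (by simp)
  have hp3m : p3 ∈ convexHull ℝ ({p1,p2,p3,p4} : Set (ℝ×ℝ)) := subset_convexHull ℝ _ (by simp)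
  have hp4m : p4 ∈ convexHull ℝ ({p1,p2,p3,p4} : Set (ℝ×ℝ)) := subset_convexHull ℝ _ (by simp)
  have hconv := convex_convexHull ℝ ({p1,p2,p3,p4} : Set (ℝ×ℝ))
  have hmaps : Set.MapsTo Φ (Set.Icc (0 : ℝ) 1 ×ˢ Set.Icc (0 : ℝ) 1)
      (convexHull ℝ {p1, p2, p3, p4}) := by
    rintro ⟨x, y⟩ ⟨⟨hx0, hx1⟩, ⟨hy0, hy1⟩⟩
    have hu : (1-x) • p1 + x • p2 ∈ convexHull ℝ ({p1,p2,p3,p4} : Set (ℝ×ℝ)) :=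
      hconv hp1m hp2m (by linarith) hx0 (by ring)
    have hv : (1-x) • p4 + x • p3 ∈ convexHull ℝ ({p1,p2,p3,p4} : Set (ℝ×ℝ)) :=
      hconv hp4m hp3m (by linarith) hx0 (by ring)
    have hmem := hconv hu hv (by linarith : (0:ℝ) ≤ 1-y) hy0 (by ring)
    have hpt : ((1-x)*(1-y)) • p1 + (x*(1-y)) • p2 + (x*y) • p3 + ((1-x)*y) • p4
        = (1-y) • ((1-x) • p1 + x • p2) + y • ((1-x) • p4 + x • p3) := by module
    show Φ (x, y) ∈ _
    rw [hΦ x y, hpt]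
    exact hmem
  -- surjectivity
  have hsurj : Set.SurjOn Φ (Set.Icc (0 : ℝ) 1 ×ˢ Set.Icc (0 : ℝ) 1)
      (convexHull ℝ {p1, p2, p3, p4}) := by
    intro q hq
    have hset : ({p1,p2,p3,p4} : Set (ℝ×ℝ)) = {p1,p2} ∪ {p3,p4} := by
      ext z; simp only [Set.mem_insert_iff, Set.mem_singleton_iff, Set.mem_union]; tauto
    rw [hset, convexHull_union (Set.insert_nonempty _ _) (Set.insert_nonempty _ _),
      convexHull_pair, convexHull_pair, mem_convexJoin] at hq
    obtain ⟨u, hu, v, hv, hquv⟩ := hq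
    obtain ⟨a1, a2, ha1, ha2, hasum, hu'⟩ := hu
    obtain ⟨b1, b2, hb1, hb2, hbsum, hv'⟩ := hv
    obtain ⟨t1, t2, ht1, ht2, htsum, hq''⟩ := hquv
    have hqw : q = (t1*a1) • p1 + (t1*a2) • p2 + (t2*b1) • p3 + (t2*b2) • p4 := by
      rw [← hq'', ← hu', ← hv']; module
    have hrel : ((p4.1 - p3.1) * (p2.2 - p3.2) - (p2.1 - p3.1) * (p4.2 - p3.2)) • p1
        + ((p2.1 - p1.1) * (p4.2 - p1.2) - (p4.1 - p1.1) * (p2.2 - p1.2)) • p3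
        = ((p1.1 - p4.1) * (p3.2 - p4.2) - (p3.1 - p4.1) * (p1.2 - p4.2)) • p2
        + ((p3.1 - p2.1) * (p1.2 - p2.2) - (p1.1 - p2.1) * (p3.2 - p2.2)) • p4 := by
      apply Prod.ext <;>
        simp only [Prod.fst_add, Prod.snd_add, Prod.smul_fst, Prod.smul_snd, smul_eq_mul] <;>
        ring
    have hssum : ((p4.1 - p3.1) * (p2.2 - p3.2) - (p2.1 - p3.1) * (p4.2 - p3.2))
        + ((p2.1 - p1.1) * (p4.2 - p1.2) - (p4.1 - p1.1) * (p2.2 - p1.2))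
        = ((p1.1 - p4.1) * (p3.2 - p4.2) - (p3.1 - p4.1) * (p1.2 - p4.2))
        + ((p3.1 - p2.1) * (p1.2 - p2.2) - (p1.1 - p2.1) * (p3.2 - p2.2)) := by ring
    obtain ⟨x, y, hx, hy, hxy⟩ := surj_aux p1 p2 p3 p4 q _ _ _ _ (t1*a1) (t1*a2) (t2*b1) (t2*b2)
      h3 h4 h1 h2 hrel hssum (mul_nonneg ht1 ha1) (mul_nonneg ht1 ha2)
      (mul_nonneg ht2 hb1) (mul_nonneg ht2 hb2)
      (by linear_combination t1*hasum + t2*hbsum + htsum) hqw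
    exact ⟨(x, y), ⟨hx, hy⟩, by rw [hΦ x y]; exact hxy⟩
  have hbij : Set.BijOn Φ (Set.Icc (0 : ℝ) 1 ×ˢ Set.Icc (0 : ℝ) 1)
      (convexHull ℝ {p1, p2, p3, p4}) := ⟨hmaps, hinj, hsurj⟩
  refine ⟨hbij, hJpos, ?_⟩
  intro f _
  have hS : MeasurableSet (Set.Icc (0:ℝ) 1 ×ˢ Set.Icc (0:ℝ) 1) :=
    measurableSet_Icc.prod measurableSet_Icc
  have himg : Φ '' (Set.Icc (0:ℝ) 1 ×ˢ Set.Icc (0:ℝ) 1) = convexHull ℝ {p1, p2, p3, p4} :=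
    hbij.image_eq
  rw [← himg,
    integral_image_eq_integral_abs_det_fderiv_smul volume hS
      (fun x _ => (hLx x).hasFDerivWithinAt) hinj f]
  apply setIntegral_congr_fun hS
  intro p hp
  have hdet : (L p).det = J p := by rw [hJ p, hfd p, clm_det]
  show |(L p).det| • f (Φ p) = f (Φ p) * J p
  rw [hdet, abs_of_pos (hJpos p hp), smul_eq_mul, mul_comm]
end
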